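/- Neumann series with tame bounds: let X ⊆ Y be normed spaces with norms ‖·‖_{s'} ≥ ‖·‖_s, fix w with an associated quantity W := ‖w‖_{s'+σ} ≥ 0, and let R be a linear operator and 0 < ε L(s') ≤ c small such that for all h: ‖Rh‖_{s'} ≤ εL(s')(‖h‖_{s'} + W‖h‖_s) and ‖Rh‖_s ≤ εL‖h‖_s with L ≤ L(s'). Then for every p ≥ 1, ‖R^p h‖_{s'} ≤ (εL(s'))^p (‖h‖_{s'} + p W ‖h‖_s); consequently, if εL(s') ≤ 1/2 then Id − R is invertible and ‖(Id−R)^{−1}h‖_{s'} ≤ 2(‖h‖_{s'} + W‖h‖_s). -/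

import Mathlib

/-- Neumann series with tame bounds: `‖·‖` is the `s'`-norm and `ns` the (weaker)
`s`-norm, `W = ‖w‖_{s'+σ}`. If `‖Rh‖_{s'} ≤ εL(s')(‖h‖_{s'} + W‖h‖_s)` and
`‖Rh‖_s ≤ εL‖h‖_s` with `L ≤ L(s')`, then `‖R^p h‖_{s'} ≤ (εL(s'))^p(‖h‖_{s'} + pW‖h‖_s)`
for every `p ≥ 1`; consequently, if `εL(s') ≤ 1/2` then `Id − R` is invertible with
`‖(Id−R)⁻¹h‖_{s'} ≤ 2(‖h‖_{s'} + W‖h‖_s)`. -/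
theorem stmt12 {E : Type*} [NormedAddCommGroup E] [NormedSpace ℝ E] [CompleteSpace E]
    (R : Module.End ℝ E) (ns : E → ℝ) (W ε L L' : ℝ)
    (hW : 0 ≤ W) (hε : 0 < ε) (hL : 0 ≤ L) (hL' : 0 < L') (hLL' : L ≤ L')
    (hns0 : ∀ h : E, 0 ≤ ns h) (hns1 : ∀ h : E, ns h ≤ ‖h‖)
    (hRs' : ∀ h : E, ‖R h‖ ≤ ε * L' * (‖h‖ + W * ns h))
    (hRs : ∀ h : E, ns (R h) ≤ ε * L * ns h) :
    (∀ p : ℕ, 1 ≤ p → ∀ h : E,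
      ‖(R ^ p) h‖ ≤ (ε * L') ^ p * (‖h‖ + (p : ℝ) * W * ns h))
    ∧ (ε * L' ≤ 1 / 2 → ∃ T : Module.End ℝ E,
        (∀ u : E, T (u - R u) = u) ∧ (∀ h : E, T h - R (T h) = h) ∧
        ∀ h : E, ‖T h‖ ≤ 2 * (‖h‖ + W * ns h)) := by
  set q : ℝ := ε * L' with hqdef
  have hq0 : 0 < q := mul_pos hε hL'
  have hεL : 0 ≤ ε * L := mul_nonneg hε.le hL
  have hεLq : ε * L ≤ q := by
    apply mul_le_mul_of_nonneg_left hLL' hε.le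
  -- key estimate for all powers
  have key : ∀ p : ℕ, ∀ h : E,
      ns ((R ^ p) h) ≤ (ε * L) ^ p * ns h ∧
      ‖(R ^ p) h‖ ≤ q ^ p * (‖h‖ + (p : ℝ) * W * ns h) := by
    intro p
    induction p with
    | zero => intro h; simp
    | succ n ih =>
      intro h
      obtain ⟨ih1, ih2⟩ := ih h
      have happ : (R ^ (n + 1)) h = R ((R ^ n) h) := by
        rw [pow_succ']; rfl
      have hnsn : 0 ≤ ns ((R ^ n) h) := hns0 _
      have hnsh : 0 ≤ ns h := hns0 _
      have hnh : 0 ≤ ‖h‖ := norm_nonneg _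
      have hqn : (0:ℝ) ≤ q ^ n := by positivity
      have hεLn : (ε * L) ^ n ≤ q ^ n := pow_le_pow_left₀ hεL hεLq n
      constructor
      · rw [happ]
        calc ns (R ((R ^ n) h)) ≤ ε * L * ns ((R ^ n) h) := hRs _
          _ ≤ ε * L * ((ε * L) ^ n * ns h) :=
            mul_le_mul_of_nonneg_left ih1 hεL
          _ = (ε * L) ^ (n + 1) * ns h := by ring
      · rw [happ]
        calc ‖R ((R ^ n) h)‖ ≤ ε * L' * (‖(R ^ n) h‖ + W * ns ((R ^ n) h)) := hRs' _
          _ ≤ q * (q ^ n * (‖h‖ + (n : ℝ) * W * ns h) + W * ((ε * L) ^ n * ns h)) := by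
            rw [← hqdef]
            apply mul_le_mul_of_nonneg_left _ hq0.le
            have := mul_le_mul_of_nonneg_left ih1 hW
            linarith
          _ ≤ q ^ (n + 1) * (‖h‖ + ((n : ℕ) + 1 : ℝ) * W * ns h) := by
            have h1 : W * ((ε * L) ^ n * ns h) ≤ W * (q ^ n * ns h) := by
              apply mul_le_mul_of_nonneg_left _ hW
              exact mul_le_mul_of_nonneg_right hεLn hnsh
            have : q * (q ^ n * (‖h‖ + (n : ℝ) * W * ns h) + W * (q ^ n * ns h))
                = q ^ (n + 1) * (‖h‖ + ((n : ℝ) + 1) * W * ns h) := by ring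
            nlinarith [mul_le_mul_of_nonneg_left h1 hq0.le]
          _ = q ^ (n + 1) * (‖h‖ + (((n : ℕ) + 1 : ℕ) : ℝ) * W * ns h) := by
            push_cast; ring
  refine ⟨fun p _ h => (key p h).2, fun hhalf => ?_⟩
  have hq1 : q < 1 := lt_of_le_of_lt hhalf (by norm_num)
  -- the operator as a continuous linear map
  have hbound : ∀ h : E, ‖R h‖ ≤ q * (1 + W) * ‖h‖ := by
    intro h
    have h1 := hRs' h
    have h2 := hns1 h
    have h3 := hns0 h
    nlinarith [norm_nonneg h, mul_nonneg (mul_nonneg hq0.le hW) (sub_nonneg.2 h2)]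
  set x : E →L[ℝ] E := R.mkContinuous (q * (1 + W)) hbound with hxdef
  have hxR : ∀ u : E, x u = R u := fun u => rfl
  have hxpow : ∀ (n : ℕ) (u : E), (x ^ n) u = (R ^ n) u := by
    intro n
    induction n with
    | zero => intro u; rfl
    | succ m ih =>
      intro u
      have : x ^ (m + 1) = x ^ m * x := pow_succ x m
      rw [this, pow_succ]
      exact ih (R u)
  have habs : ‖q‖ < 1 := by rwa [Real.norm_eq_abs, abs_of_nonneg hq0.le]
  have hgeo : Summable (fun n : ℕ => q ^ n) := summable_geometric_of_lt_one hq0.le hq1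
  have hngeo : Summable (fun n : ℕ => (n : ℝ) * q ^ n) := by
    have := summable_pow_mul_geometric_of_norm_lt_one 1 habs (R := ℝ)
    simpa using this
  -- summability of operator powers
  have hxn : ∀ n : ℕ, ‖x ^ n‖ ≤ q ^ n * (1 + (n : ℝ) * W) := by
    intro n
    apply ContinuousLinearMap.opNorm_le_bound
    · have : (0:ℝ) ≤ (n : ℝ) * W := by positivity
      positivity
    · intro u
      have h1 : ‖(x ^ n) u‖ = ‖(R ^ n) u‖ := by rw [hxpow]
      have h2 := (key n u).2
      have h3 := hns1 u
      have h4 := hns0 u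
      have hqn : (0:ℝ) ≤ q ^ n := by positivity
      have h5 : (0:ℝ) ≤ (n : ℝ) * W := by positivity
      rw [h1]
      nlinarith [mul_le_mul_of_nonneg_left h3 (mul_nonneg (mul_nonneg hqn (Nat.cast_nonneg n)) hW)]
  have hsum : Summable (fun n : ℕ => x ^ n) := by
    refine Summable.of_norm_bounded ?_ hxn
    have h2 := hngeo.mul_left W
    have : Summable (fun n : ℕ => q ^ n + W * ((n : ℝ) * q ^ n)) := hgeo.add h2
    exact this.congr (fun n => by ring)
  set S : E →L[ℝ] E := ∑' n : ℕ, x ^ n with hSdef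
  have hS : HasSum (fun n : ℕ => x ^ n) S := hsum.hasSum
  have hpartial : Filter.Tendsto (fun N => ∑ n ∈ Finset.range N, x ^ n)
      Filter.atTop (nhds S) := hS.tendsto_sum_nat
  have hx0 : Filter.Tendsto (fun n : ℕ => x ^ n) Filter.atTop (nhds 0) :=
    hsum.tendsto_atTop_zero
  have hleft : (1 - x) * S = 1 := by
    have t1 : Filter.Tendsto (fun N => (1 - x) * ∑ n ∈ Finset.range N, x ^ n)
        Filter.atTop (nhds ((1 - x) * S)) := hpartial.const_mul _
    have t2 : (fun N => (1 - x) * ∑ n ∈ Finset.range N, x ^ n)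
        = fun N => 1 - x ^ N := by
      funext N
      have := mul_geom_sum x N
      have h' : (1 - x) * ∑ n ∈ Finset.range N, x ^ n
          = -((x - 1) * ∑ n ∈ Finset.range N, x ^ n) := by
        rw [← neg_sub x 1, neg_mul]
      rw [h', this, neg_sub]
    rw [t2] at t1
    have t3 : Filter.Tendsto (fun N : ℕ => 1 - x ^ N) Filter.atTop (nhds (1 - 0)) :=
      Filter.Tendsto.const_sub 1 hx0
    rw [sub_zero] at t3
    exact tendsto_nhds_unique t1 t3
  have hright : S * (1 - x) = 1 := by
    have t1 : Filter.Tendsto (fun N => (∑ n ∈ Finset.range N, x ^ n) * (1 - x))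
        Filter.atTop (nhds (S * (1 - x))) := hpartial.mul_const _
    have t2 : (fun N => (∑ n ∈ Finset.range N, x ^ n) * (1 - x))
        = fun N => 1 - x ^ N := by
      funext N
      have := geom_sum_mul x N
      have h' : (∑ n ∈ Finset.range N, x ^ n) * (1 - x)
          = -((∑ n ∈ Finset.range N, x ^ n) * (x - 1)) := by
        rw [← neg_sub x 1, mul_neg]
      rw [h', this, neg_sub]
    rw [t2] at t1
    have t3 : Filter.Tendsto (fun N : ℕ => 1 - x ^ N) Filter.atTop (nhds (1 - 0)) :=
      Filter.Tendsto.const_sub 1 hx0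
    rw [sub_zero] at t3
    exact tendsto_nhds_unique t1 t3
  refine ⟨S.toLinearMap, ?_, ?_, ?_⟩
  · intro u
    have h1 : u - R u = (1 - x) u := by
      simp [ContinuousLinearMap.sub_apply, hxR]
    have h2 : S ((1 - x) u) = (S * (1 - x)) u := rfl
    show S (u - R u) = u
    rw [h1, h2, hright]; rfl
  · intro h
    have h2 : S h - x (S h) = ((1 - x) * S) h := by
      simp [ContinuousLinearMap.mul_apply, ContinuousLinearMap.sub_apply]
    show S h - R (S h) = h
    rw [← hxR, h2, hleft]; rfl
  · intro h
    show ‖S h‖ ≤ 2 * (‖h‖ + W * ns h)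
    have happ : HasSum (fun n : ℕ => (x ^ n) h) (S h) :=
      hS.mapL (ContinuousLinearMap.apply ℝ E h)
    have hnsh : 0 ≤ ns h := hns0 h
    have hnh : 0 ≤ ‖h‖ := norm_nonneg h
    have hb : ∀ n : ℕ, ‖(x ^ n) h‖ ≤ ‖h‖ * q ^ n + (W * ns h) * ((n : ℝ) * q ^ n) := by
      intro n
      rw [hxpow]
      have := (key n h).2
      calc ‖(R ^ n) h‖ ≤ q ^ n * (‖h‖ + (n : ℝ) * W * ns h) := this
        _ = ‖h‖ * q ^ n + (W * ns h) * ((n : ℝ) * q ^ n) := by ring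
    have hgsum : Summable (fun n : ℕ => ‖h‖ * q ^ n + (W * ns h) * ((n : ℝ) * q ^ n)) :=
      (hgeo.mul_left ‖h‖).add (hngeo.mul_left (W * ns h))
    have hnormsum : Summable (fun n : ℕ => ‖(x ^ n) h‖) := by
      apply Summable.of_nonneg_of_le (fun n => norm_nonneg _) hb hgsum
    have h1 : ‖S h‖ ≤ ∑' n : ℕ, ‖(x ^ n) h‖ := by
      rw [← happ.tsum_eq]
      exact norm_tsum_le_tsum_norm hnormsum
    have h2 : ∑' n : ℕ, ‖(x ^ n) h‖
        ≤ ∑' n : ℕ, (‖h‖ * q ^ n + (W * ns h) * ((n : ℝ) * q ^ n)) :=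
      Summable.tsum_le_tsum hb hnormsum hgsum
    have h3 : ∑' n : ℕ, (‖h‖ * q ^ n + (W * ns h) * ((n : ℝ) * q ^ n))
        = ‖h‖ * (1 - q)⁻¹ + (W * ns h) * (q / (1 - q) ^ 2) := by
      rw [Summable.tsum_add (hgeo.mul_left ‖h‖) (hngeo.mul_left (W * ns h)),
        tsum_mul_left, tsum_mul_left, tsum_geometric_of_lt_one hq0.le hq1,
        tsum_coe_mul_geometric_of_norm_lt_one habs]
    have hq2 : (1 - q)⁻¹ ≤ 2 := by
      rw [inv_le_iff_one_le_mul₀ (by linarith)]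
      linarith
    have hq3 : q / (1 - q) ^ 2 ≤ 2 := by
      rw [div_le_iff₀ (by nlinarith)]
      nlinarith
    have h4 : ‖h‖ * (1 - q)⁻¹ + (W * ns h) * (q / (1 - q) ^ 2) ≤ 2 * (‖h‖ + W * ns h) := by
      have i1 : ‖h‖ * (1 - q)⁻¹ ≤ ‖h‖ * 2 := mul_le_mul_of_nonneg_left hq2 hnh
      have i2 : (W * ns h) * (q / (1 - q) ^ 2) ≤ (W * ns h) * 2 :=
        mul_le_mul_of_nonneg_left hq3 (mul_nonneg hW hnsh)
      linarith
    linarith
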